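/- arXiv:2011.07833 — 6 statements merged into one kernel-verified Lean document; each statement's English description precedes it below -/
import Mathlib

section
/- Let A be a real n×N matrix, B a real n×q matrix, W a real q×m matrix, U₀ a real m×T matrix, Ū₀ a real q×T matrix, D₀ and X₁ real n×T matrices, Z₀ a real N×T matrix, Y a real T×p matrix, H a real N×p matrix, and P an invertible real p×p matrix. Assume the data equation X₁ = A·Z₀ + B·Ū₀ + D₀ and the consistency condition Z₀·Y = H·P. Define E := [B D₀] (n×(q+T) block matrix) and Û₀ := [Ū₀ − W·U₀ ; I_T] (vertical block stacking of the q×T matrix Ū₀ − W·U₀ on top of the T×T identity, a (q+T)×T matrix). Then A·H·P + B·W·U₀·Y = (X₁ − E·Û₀)·Y. (This is the data-based representation of the closed-loop dynamics.) -/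
open Matrix

/-- Data-based representation of the closed-loop dynamics:
under the data equation `X₁ = A Z₀ + B Ū₀ + D₀` and the consistency condition
`Z₀ Y = H P`, with `E := [B D₀]` and `Û₀ := [Ū₀ − W U₀ ; I_T]`, one has
`A H P + B W U₀ Y = (X₁ − E Û₀) Y`. -/
theorem data_based_closed_loop {n N q m T p : ℕ}
    (A : Matrix (Fin n) (Fin N) ℝ) (B : Matrix (Fin n) (Fin q) ℝ)
    (W : Matrix (Fin q) (Fin m) ℝ) (U₀ : Matrix (Fin m) (Fin T) ℝ)
    (Ubar₀ : Matrix (Fin q) (Fin T) ℝ)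
    (D₀ X₁ : Matrix (Fin n) (Fin T) ℝ)
    (Z₀ : Matrix (Fin N) (Fin T) ℝ)
    (Y : Matrix (Fin T) (Fin p) ℝ) (H : Matrix (Fin N) (Fin p) ℝ)
    (P : Matrix (Fin p) (Fin p) ℝ) (hP : IsUnit P)
    (hdata : X₁ = A * Z₀ + B * Ubar₀ + D₀)
    (hcons : Z₀ * Y = H * P) :
    A * H * P + B * W * U₀ * Y
      = (X₁ - (fromCols B D₀) * (fromRows (Ubar₀ - W * U₀) (1 : Matrix (Fin T) (Fin T) ℝ))) * Y := by
  subst hdata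
  rw [fromCols_mul_fromRows]
  have : A * Z₀ + B * Ubar₀ + D₀ - (B * (Ubar₀ - W * U₀) + D₀ * (1 : Matrix (Fin T) (Fin T) ℝ))
      = A * Z₀ + B * (W * U₀) := by
    rw [Matrix.mul_sub, Matrix.mul_one]
    abel
  simp only [this, Matrix.add_mul, Matrix.mul_assoc, hcons]
end

section
/- Let G be a real p×n matrix, X₁ a real n×T matrix, E a real n×(q+T) matrix, Û a real (q+T)×T matrix, Y a real T×p matrix, and R_E a real n×(q+T) matrix. Assume E·Eᵀ ⪯ R_E·R_Eᵀ, let ε₁ ≥ 0 and ε₂ > 0 be real numbers, set Υ_E := −G·X₁·Y − Yᵀ·X₁ᵀ·Gᵀ − ε₂·G·R_E·R_Eᵀ·Gᵀ, and assume that the (p+q+T)×(p+q+T) block matrix [[Υ_E − ε₁·I_p, Yᵀ·Ûᵀ], [Û·Y, ε₂·I_{q+T}]] is positive semidefinite. Then −G·(X₁ − E·Û)·Y − Yᵀ·(X₁ − E·Û)ᵀ·Gᵀ ⪰ ε₁·I_p. (Pointwise form of the robust stabilization condition of Theorem 1.) -/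
open Matrix

lemma psd_smul_aux {m : Type*} [Fintype m] {M : Matrix m m ℝ} (hM : M.PosSemidef)
    {c : ℝ} (hc : 0 ≤ c) : (c • M).PosSemidef := by
  refine posSemidef_iff_dotProduct_mulVec.mpr ⟨?_, fun x => ?_⟩
  · unfold Matrix.IsHermitian
    rw [conjTranspose_smul, hM.1.eq]
    simp
  · rw [smul_mulVec, dotProduct_smul, smul_eq_mul]
    exact mul_nonneg hc ((posSemidef_iff_dotProduct_mulVec.mp hM).2 x)

/-- Pointwise form of the robust stabilization condition of Theorem 1:
if `E Eᵀ ⪯ R_E R_Eᵀ`, `ε₁ ≥ 0`, `ε₂ > 0`, and the block matrix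
`[[Υ_E − ε₁ I, Yᵀ Ûᵀ], [Û Y, ε₂ I]]` with
`Υ_E := −G X₁ Y − Yᵀ X₁ᵀ Gᵀ − ε₂ G R_E R_Eᵀ Gᵀ` is positive semidefinite,
then `−G (X₁ − E Û) Y − Yᵀ (X₁ − E Û)ᵀ Gᵀ ⪰ ε₁ I`. -/
theorem robust_stabilization_pointwise {p n T q : ℕ}
    (G : Matrix (Fin p) (Fin n) ℝ) (X₁ : Matrix (Fin n) (Fin T) ℝ)
    (E : Matrix (Fin n) (Fin (q + T)) ℝ) (Uhat : Matrix (Fin (q + T)) (Fin T) ℝ)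
    (Y : Matrix (Fin T) (Fin p) ℝ) (R_E : Matrix (Fin n) (Fin (q + T)) ℝ)
    (hE : (R_E * R_Eᵀ - E * Eᵀ).PosSemidef)
    (ε₁ ε₂ : ℝ) (hε₁ : 0 ≤ ε₁) (hε₂ : 0 < ε₂)
    (hblock : (fromBlocks
        ((-(G * X₁ * Y) - Yᵀ * X₁ᵀ * Gᵀ - ε₂ • (G * R_E * R_Eᵀ * Gᵀ))
          - ε₁ • (1 : Matrix (Fin p) (Fin p) ℝ))
        (Yᵀ * Uhatᵀ) (Uhat * Y)
        (ε₂ • (1 : Matrix (Fin (q + T)) (Fin (q + T)) ℝ))).PosSemidef) :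
    ((-(G * (X₁ - E * Uhat) * Y) - Yᵀ * (X₁ - E * Uhat)ᵀ * Gᵀ)
      - ε₁ • (1 : Matrix (Fin p) (Fin p) ℝ)).PosSemidef := by
  set D : Matrix (Fin (q + T)) (Fin (q + T)) ℝ := ε₂ • 1 with hDdef
  have hDdiag : D = diagonal (fun _ => ε₂) := by
    ext i j
    by_cases h : i = j <;> simp [hDdef, Matrix.one_apply, h]
  have hD : D.PosDef := by
    rw [hDdiag]
    exact posDef_diagonal_iff.mpr fun _ => hε₂
  haveI : Invertible D := by
    refine invertibleOfRightInverse _ (ε₂⁻¹ • 1) ?_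
    rw [hDdef, smul_mul_smul_comm, one_mul, mul_inv_cancel₀ hε₂.ne', one_smul]
  have hDinv : D⁻¹ = ε₂⁻¹ • 1 := by
    apply Matrix.inv_eq_right_inv
    rw [hDdef, smul_mul_smul_comm, one_mul, mul_inv_cancel₀ hε₂.ne', one_smul]
  have hBH : (Yᵀ * Uhatᵀ)ᴴ = Uhat * Y := by
    rw [conjTranspose_eq_transpose_of_trivial, transpose_mul, transpose_transpose,
      transpose_transpose]
  have hblock' : (fromBlocks
      ((-(G * X₁ * Y) - Yᵀ * X₁ᵀ * Gᵀ - ε₂ • (G * R_E * R_Eᵀ * Gᵀ))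
        - ε₁ • (1 : Matrix (Fin p) (Fin p) ℝ))
      (Yᵀ * Uhatᵀ) ((Yᵀ * Uhatᵀ)ᴴ) D).PosSemidef := by
    rw [hBH]; exact hblock
  have hS := (Matrix.PosDef.fromBlocks₂₂ _ _ hD).mp hblock'
  rw [hDinv, hBH] at hS
  -- the rank-one-style correction term
  set M : Matrix (Fin p) (Fin (q + T)) ℝ := G * E + ε₂⁻¹ • (Yᵀ * Uhatᵀ) with hMdef
  have hMM : (ε₂ • (M * Mᴴ)).PosSemidef :=
    psd_smul_aux (posSemidef_self_mul_conjTranspose M) hε₂.le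
  have hEc : (ε₂ • (G * ((R_E * R_Eᵀ - E * Eᵀ) * Gᴴ))).PosSemidef :=
    psd_smul_aux (by simpa [Matrix.mul_assoc] using hE.mul_mul_conjTranspose_same G) hε₂.le
  have key : ((-(G * (X₁ - E * Uhat) * Y) - Yᵀ * (X₁ - E * Uhat)ᵀ * Gᵀ)
      - ε₁ • (1 : Matrix (Fin p) (Fin p) ℝ))
      = ((-(G * X₁ * Y) - Yᵀ * X₁ᵀ * Gᵀ - ε₂ • (G * R_E * R_Eᵀ * Gᵀ)
          - ε₁ • (1 : Matrix (Fin p) (Fin p) ℝ))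
        - (Yᵀ * Uhatᵀ) * (ε₂⁻¹ • (1 : Matrix (Fin (q + T)) (Fin (q + T)) ℝ)) * (Uhat * Y))
        + ε₂ • (G * ((R_E * R_Eᵀ - E * Eᵀ) * Gᴴ)) + ε₂ • (M * Mᴴ) := by
    have hε₂' : ε₂ * ε₂⁻¹ = 1 := mul_inv_cancel₀ hε₂.ne'
    have hε₂'' : ε₂ * (ε₂⁻¹ * ε₂⁻¹) = ε₂⁻¹ := by
      rw [← mul_assoc, hε₂', one_mul]
    simp only [hMdef, conjTranspose_eq_transpose_of_trivial, transpose_add, transpose_smul,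
      transpose_mul, transpose_transpose, transpose_sub, Matrix.mul_add, Matrix.add_mul,
      Matrix.mul_sub, Matrix.sub_mul, smul_sub, smul_add, Matrix.smul_mul, Matrix.mul_smul,
      smul_smul, hε₂', hε₂'', one_smul, Matrix.mul_one, Matrix.one_mul, Matrix.mul_assoc]
    abel
  rw [key]
  exact (hS.add hEc).add hMM
end

section
/- Consider the nonlinear system ẋ = A·Z(x) + B·W(x)·u with state x ∈ ℝⁿ and input u ∈ ℝᵐ, where A is a real n×N matrix, B a real n×q matrix, Z : ℝⁿ → ℝᴺ, and W : ℝⁿ → ℝ^{q×m}. Let Ẑ : ℝⁿ → ℝᵖ be differentiable and H : ℝⁿ → ℝ^{N×p} satisfy Z(x) = H(x)·Ẑ(x) for all x. Let U₀ ∈ ℝ^{m×T}, Z₀ ∈ ℝ^{N×T}, Ū₀ ∈ ℝ^{q×T}, D₀, X₁ ∈ ℝ^{n×T} satisfy the data equation X₁ = A·Z₀ + B·Ū₀ + D₀, and assume D₀·D₀ᵀ ⪯ R_D·R_Dᵀ and B·Bᵀ ⪯ R_B·R_Bᵀ for given R_D ∈ ℝ^{n×T}, R_B ∈ ℝ^{n×q};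 set R_E := [R_B R_D]. Suppose there exist a positive definite P ∈ ℝ^{p×p}, a map Y : ℝⁿ → ℝ^{T×p}, a function ε₁ : ℝⁿ → ℝ with ε₁(x) ≥ 0, and a constant ε₂ > 0 such that for all x ∈ ℝⁿ: (i) Z₀·Y(x) = H(x)·P, and (ii) with G(x) := the Jacobian ∂Ẑ/∂x (a p×n matrix), Û₀(x) := [Ū₀ − W(x)·U₀ ; I_T], and Υ_E(x) := −G(x)·X₁·Y(x) − Y(x)ᵀ·X₁ᵀ·G(x)ᵀ − ε₂·G(x)·R_E·R_Eᵀ·G(x)ᵀ, the block matrix [[Υ_E(x) − ε₁(x)·I_p, Y(x)ᵀ·Û₀(x)ᵀ], [Û₀(x)·Y(x), ε₂·I_{q+T}]] is positive semidefinite. Then, under the feedback u = U₀·Y(x)·P⁻¹·Ẑ(x), for every differentiable solution x : ℝ → ℝⁿ of the closed-loop system ẋ = A·Z(x) + B·W(x)·U₀·Y(x)·P⁻¹·Ẑ(x), the function t ↦ V(x(t)) with V(x) = Ẑ(x)ᵀ·P⁻¹·Ẑ(x) has derivative at every time t satisfying d/dt V(x(t)) ≤ −ε₁(x(t))·Ẑ(x(t))ᵀ·P⁻¹·P⁻¹·Ẑ(x(t)).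 (Lyapunov decrease conclusion of Theorem 1, with the SOS conditions relaxed to pointwise positive semidefiniteness.) -/
open Matrix

section Aux

lemma hasDerivAt_quadForm {p : ℕ} (M : Matrix (Fin p) (Fin p) ℝ)
    {f : ℝ → Fin p → ℝ} {f' : Fin p → ℝ} {t : ℝ} (hf : HasDerivAt f f' t) :
    HasDerivAt (fun s => f s ⬝ᵥ M *ᵥ f s) (f' ⬝ᵥ M *ᵥ f t + f t ⬝ᵥ M *ᵥ f') t := by
  have h1 : ∀ i, HasDerivAt (fun s => f s i) (f' i) t := hasDerivAt_pi.1 hf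
  have h2 : ∀ i, HasDerivAt (fun s => (M *ᵥ f s) i) ((M *ᵥ f') i) t := by
    intro i
    simpa [mulVec, dotProduct] using
      HasDerivAt.fun_sum (fun j (_ : j ∈ Finset.univ) => (h1 j).const_mul (M i j))
  have h3 := HasDerivAt.fun_sum (fun i (_ : i ∈ Finset.univ) => (h1 i).mul (h2 i))
  simpa [dotProduct, Finset.sum_add_distrib] using h3

/-- shift a matrix across a dot product -/
lemma dp_shift {k l : Type*} [Fintype k] [Fintype l]
    (M : Matrix k l ℝ) (u : k → ℝ) (s : l → ℝ) :
    u ⬝ᵥ M *ᵥ s = (Mᵀ *ᵥ u) ⬝ᵥ s := by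
  rw [Matrix.dotProduct_mulVec, Matrix.mulVec_transpose]

lemma quad_transpose {k : Type*} [Fintype k] (M : Matrix k k ℝ) (u : k → ℝ) :
    u ⬝ᵥ Mᵀ *ᵥ u = u ⬝ᵥ M *ᵥ u := by
  rw [dp_shift, Matrix.transpose_transpose, dotProduct_comm]

lemma quad_conj {k l : Type*} [Fintype k] [Fintype l]
    (Gm : Matrix k l ℝ) (M : Matrix l l ℝ) (w : k → ℝ) :
    w ⬝ᵥ (Gm * M * Gmᵀ) *ᵥ w = (Gmᵀ *ᵥ w) ⬝ᵥ M *ᵥ (Gmᵀ *ᵥ w) := by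
  rw [Matrix.mul_assoc, ← Matrix.mulVec_mulVec, dp_shift, ← Matrix.mulVec_mulVec]

end Aux

set_option maxHeartbeats 1600000 in
/-- Lyapunov decrease conclusion of Theorem 1 (noisy-data stabilization of polynomial
systems), with the SOS conditions relaxed to pointwise positive semidefiniteness:
along every solution of the closed-loop system
`ẋ = A Z(x) + B W(x) U₀ Y(x) P⁻¹ Ẑ(x)`, the function `V(x) = Ẑ(x)ᵀ P⁻¹ Ẑ(x)`
satisfies `d/dt V(x(t)) ≤ −ε₁(x(t)) Ẑ(x(t))ᵀ P⁻¹ P⁻¹ Ẑ(x(t))`. -/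
theorem lyapunov_decrease_thm1 {n m N q p T : ℕ}
    (A : Matrix (Fin n) (Fin N) ℝ) (B : Matrix (Fin n) (Fin q) ℝ)
    (Zf : (Fin n → ℝ) → (Fin N → ℝ))
    (W : (Fin n → ℝ) → Matrix (Fin q) (Fin m) ℝ)
    (Zhat : (Fin n → ℝ) → (Fin p → ℝ))
    (Hm : (Fin n → ℝ) → Matrix (Fin N) (Fin p) ℝ)
    (G : (Fin n → ℝ) → Matrix (Fin p) (Fin n) ℝ)
    -- `Ẑ` is differentiable with Jacobian `G(x)` at every point
    (hZhat : ∀ y : Fin n → ℝ,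
      HasFDerivAt Zhat ((Matrix.mulVecLin (G y)).toContinuousLinearMap) y)
    -- `Z(x) = H(x) Ẑ(x)`
    (hZH : ∀ y : Fin n → ℝ, Zf y = (Hm y).mulVec (Zhat y))
    (U₀ : Matrix (Fin m) (Fin T) ℝ) (Z₀ : Matrix (Fin N) (Fin T) ℝ)
    (Ubar₀ : Matrix (Fin q) (Fin T) ℝ)
    (D₀ X₁ : Matrix (Fin n) (Fin T) ℝ)
    (R_D : Matrix (Fin n) (Fin T) ℝ) (R_B : Matrix (Fin n) (Fin q) ℝ)
    -- the data equation
    (hdata : X₁ = A * Z₀ + B * Ubar₀ + D₀)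
    -- bounds on the noise and on `B`
    (hD : (R_D * R_Dᵀ - D₀ * D₀ᵀ).PosSemidef)
    (hB : (R_B * R_Bᵀ - B * Bᵀ).PosSemidef)
    (P : Matrix (Fin p) (Fin p) ℝ) (hP : P.PosDef)
    (Y : (Fin n → ℝ) → Matrix (Fin T) (Fin p) ℝ)
    (ε₁ : (Fin n → ℝ) → ℝ) (hε₁ : ∀ y, 0 ≤ ε₁ y)
    (ε₂ : ℝ) (hε₂ : 0 < ε₂)
    -- consistency condition (i): `Z₀ Y(x) = H(x) P`
    (hcons : ∀ y : Fin n → ℝ, Z₀ * Y y = Hm y * P)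
    -- pointwise positive semidefiniteness condition (ii)
    (hblock : ∀ y : Fin n → ℝ,
      (fromBlocks
        ((-(G y * X₁ * Y y) - (Y y)ᵀ * X₁ᵀ * (G y)ᵀ
            - ε₂ • (G y * (fromCols R_B R_D) * (fromCols R_B R_D)ᵀ * (G y)ᵀ))
          - ε₁ y • (1 : Matrix (Fin p) (Fin p) ℝ))
        ((Y y)ᵀ * (fromRows (Ubar₀ - W y * U₀) (1 : Matrix (Fin T) (Fin T) ℝ))ᵀ)
        ((fromRows (Ubar₀ - W y * U₀) (1 : Matrix (Fin T) (Fin T) ℝ)) * Y y)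
        (ε₂ • (1 : Matrix (Fin q ⊕ Fin T) (Fin q ⊕ Fin T) ℝ))).PosSemidef)
    -- a differentiable solution of the closed-loop system
    (x : ℝ → (Fin n → ℝ))
    (hx : ∀ t : ℝ, HasDerivAt x
      (A.mulVec (Zf (x t)) + (B * W (x t) * U₀ * Y (x t) * P⁻¹).mulVec (Zhat (x t))) t) :
    ∀ t : ℝ, ∃ d : ℝ,
      HasDerivAt (fun s => Zhat (x s) ⬝ᵥ (P⁻¹.mulVec (Zhat (x s)))) d t ∧
      d ≤ -(ε₁ (x t)) * (Zhat (x t) ⬝ᵥ ((P⁻¹ * P⁻¹).mulVec (Zhat (x t)))) := by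
  intro t
  classical
  have hPd : IsUnit P.det := (Matrix.isUnit_iff_isUnit_det P).1 hP.isUnit
  have hPT : Pᵀ = P := by
    have := hP.isHermitian
    rwa [Matrix.IsHermitian, Matrix.conjTranspose_eq_transpose_of_trivial] at this
  have hPinvT : P⁻¹ᵀ = P⁻¹ := by rw [Matrix.transpose_nonsing_inv, hPT]
  set y := x t with hy
  set v := Zhat y with hv
  set w := P⁻¹ *ᵥ v with hw
  set Gy := G y with hGy
  set Yy := Y y with hYy
  set E := fromCols B D₀ with hE
  set RE := fromCols R_B R_D with hRE
  set Uh := fromRows (Ubar₀ - W y * U₀) (1 : Matrix (Fin T) (Fin T) ℝ) with hUh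
  set K := B * (Ubar₀ - W y * U₀) + D₀ with hK
  set xd := A *ᵥ Zf y + (B * W y * U₀ * Yy * P⁻¹) *ᵥ v with hxd_def
  -- the derivative of `Ẑ ∘ x`
  have hφ : HasDerivAt (fun s => Zhat (x s)) (Gy *ᵥ xd) t := by
    have h := (hZhat y).comp_hasDerivAt t (hx t)
    exact h
  have hV := hasDerivAt_quadForm P⁻¹ hφ
  refine ⟨_, hV, ?_⟩
  -- rewrite the closed-loop vector field
  have hAH : A * Hm y = (X₁ - B * Ubar₀ - D₀) * Yy * P⁻¹ := by
    have h1 : A * Z₀ = X₁ - B * Ubar₀ - D₀ := by rw [hdata]; abel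
    have h2 : A * Hm y * P = (X₁ - B * Ubar₀ - D₀) * Yy := by
      rw [Matrix.mul_assoc, ← hcons y, ← Matrix.mul_assoc, h1]
    have h3 := congrArg (fun M => M * P⁻¹) h2
    simpa only [Matrix.mul_assoc, Matrix.mul_nonsing_inv _ hPd, Matrix.mul_one] using h3
  have hxd2 : xd = ((X₁ - K) * Yy) *ᵥ w := by
    rw [hxd_def, hZH y, Matrix.mulVec_mulVec, hAH, ← hv, hw, Matrix.mulVec_mulVec,
      ← Matrix.add_mulVec]
    congr 1
    rw [hK]
    simp only [Matrix.sub_mul, Matrix.add_mul, Matrix.mul_sub, Matrix.mul_assoc]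
    abel
  -- the derivative value equals a quadratic form in `w`
  have hdval : (Gy *ᵥ xd) ⬝ᵥ P⁻¹ *ᵥ v + v ⬝ᵥ P⁻¹ *ᵥ (Gy *ᵥ xd)
      = 2 * (w ⬝ᵥ (Gy * ((X₁ - K) * Yy)) *ᵥ w) := by
    have h2 : v ⬝ᵥ P⁻¹ *ᵥ (Gy *ᵥ xd) = w ⬝ᵥ (Gy *ᵥ xd) := by
      rw [dp_shift, hPinvT, ← hw]
    rw [h2, ← hw, dotProduct_comm, ← two_mul, hxd2, Matrix.mulVec_mulVec]
  have hvt : Zhat (x t) = v := rfl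
  rw [hvt, hdval]
  -- now the algebraic inequality
  set u : Fin n → ℝ := Gyᵀ *ᵥ w with hu
  set ζ : Fin q ⊕ Fin T → ℝ := Eᵀ *ᵥ u with hζ
  have hEU : E * Uh = K := by
    rw [hE, hUh, Matrix.fromCols_mul_fromRows, Matrix.mul_one, hK]
  -- quadratic form of the block matrix at (w, ζ)
  have hq := (hblock y).dotProduct_mulVec_nonneg (Sum.elim w ζ)
  rw [show star (Sum.elim w ζ) = Sum.elim w ζ from star_trivial _] at hq
  rw [fromBlocks_mulVec, sumElim_dotProduct_sumElim] at hq
  simp only [Sum.elim_comp_inl, Sum.elim_comp_inr] at hq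
  rw [← hGy, ← hYy, ← hUh] at hq
  -- names for the scalar quadratic forms
  set a := w ⬝ᵥ (Gy * X₁ * Yy) *ᵥ w with ha
  set c := w ⬝ᵥ (Gy * (K * Yy)) *ᵥ w with hc
  set r := u ⬝ᵥ (RE * REᵀ) *ᵥ u with hr
  set e := u ⬝ᵥ (E * Eᵀ) *ᵥ u with he
  -- the common cross term
  have hkey : ((Uh * Yy) *ᵥ w) ⬝ᵥ (Eᵀ *ᵥ (Gyᵀ *ᵥ w)) = c := by
    rw [dp_shift Eᵀ, Matrix.transpose_transpose, Matrix.mulVec_mulVec,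
      dp_shift Gyᵀ, Matrix.transpose_transpose, Matrix.mulVec_mulVec,
      ← Matrix.mul_assoc E Uh Yy, hEU, dotProduct_comm]
  -- identify the terms in hq
  have hT1 : w ⬝ᵥ ((-(Gy * X₁ * Yy) - Yyᵀ * X₁ᵀ * Gyᵀ
      - ε₂ • (Gy * RE * REᵀ * Gyᵀ) - ε₁ y • (1 : Matrix (Fin p) (Fin p) ℝ)) *ᵥ w
      + (Yyᵀ * Uhᵀ) *ᵥ ζ) = -a - a - ε₂ * r - ε₁ y * (w ⬝ᵥ w) + c := by
    have htr : w ⬝ᵥ (Yyᵀ * X₁ᵀ * Gyᵀ) *ᵥ w = a := by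
      rw [show Yyᵀ * X₁ᵀ * Gyᵀ = (Gy * X₁ * Yy)ᵀ by
        rw [Matrix.transpose_mul, Matrix.transpose_mul, Matrix.mul_assoc],
        quad_transpose, ha]
    have hrr : w ⬝ᵥ (Gy * RE * REᵀ * Gyᵀ) *ᵥ w = r := by
      rw [show Gy * RE * REᵀ * Gyᵀ = Gy * (RE * REᵀ) * Gyᵀ by
        rw [Matrix.mul_assoc Gy RE REᵀ], quad_conj, ← hu, hr]
    have hcross : w ⬝ᵥ (Yyᵀ * Uhᵀ) *ᵥ ζ = c := by
      rw [hζ, hu, dp_shift (Yyᵀ * Uhᵀ), Matrix.transpose_mul, Matrix.transpose_transpose,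
        Matrix.transpose_transpose]
      exact hkey
    rw [dotProduct_add, Matrix.sub_mulVec, Matrix.sub_mulVec, Matrix.sub_mulVec,
      Matrix.neg_mulVec, dotProduct_sub, dotProduct_sub, dotProduct_sub, dotProduct_neg,
      htr, Matrix.smul_mulVec, dotProduct_smul, hrr,
      Matrix.smul_mulVec, dotProduct_smul, Matrix.one_mulVec, hcross, ← ha]
    try simp only [smul_eq_mul]
    try ring
  have hT2 : ζ ⬝ᵥ ((Uh * Yy) *ᵥ w + (ε₂ • (1 : Matrix (Fin q ⊕ Fin T) (Fin q ⊕ Fin T) ℝ)) *ᵥ ζ)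
      = c + ε₂ * e := by
    have h1 : ζ ⬝ᵥ (Uh * Yy) *ᵥ w = c := by
      rw [hζ, hu, dotProduct_comm]
      exact hkey
    have h2 : ζ ⬝ᵥ ζ = e := by
      rw [hζ, dp_shift, Matrix.transpose_transpose, Matrix.mulVec_mulVec, dotProduct_comm]
    rw [dotProduct_add, h1, Matrix.smul_mulVec, dotProduct_smul, Matrix.one_mulVec,
      h2, smul_eq_mul]
  rw [hT1, hT2] at hq
  -- `e ≤ r` from the noise bounds
  have her : e ≤ r := by
    have hsum := ((hB.add hD).dotProduct_mulVec_nonneg u)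
    rw [show star u = u from star_trivial _] at hsum
    have hmat : (R_B * R_Bᵀ - B * Bᵀ) + (R_D * R_Dᵀ - D₀ * D₀ᵀ) = RE * REᵀ - E * Eᵀ := by
      rw [hRE, hE, Matrix.transpose_fromCols, Matrix.transpose_fromCols,
        Matrix.fromCols_mul_fromRows, Matrix.fromCols_mul_fromRows]
      abel
    rw [hmat, Matrix.sub_mulVec, dotProduct_sub, ← hr, ← he, sub_nonneg] at hsum
    exact hsum
  -- the quadratic form in the goal on the right-hand side
  have hww : v ⬝ᵥ (P⁻¹ * P⁻¹) *ᵥ v = w ⬝ᵥ w := by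
    rw [← Matrix.mulVec_mulVec, dp_shift, hPinvT, ← hw]
  -- split `a - c` from the quadratic form of the vector field
  have hsplit : w ⬝ᵥ (Gy * ((X₁ - K) * Yy)) *ᵥ w = a - c := by
    rw [show Gy * ((X₁ - K) * Yy) = Gy * X₁ * Yy - Gy * (K * Yy) by
      rw [Matrix.sub_mul, Matrix.mul_sub, Matrix.mul_assoc], Matrix.sub_mulVec,
      dotProduct_sub, ← ha, ← hc]
  rw [hsplit, hww]
  -- conclude by arithmetic
  nlinarith [mul_nonneg hε₂.le (sub_nonneg.2 her)]
end

section
/- Let G be a real p×n matrix, S a real n×r matrix, W̄₀ a real r×T matrix, D₀ and X₁ real n×T matrices with X₁ = S·W̄₀ + D₀, and R_D a real n×T matrix with D₀·D₀ᵀ ⪯ R_D·R_Dᵀ. Let M be a real r×p matrix, let ε₁ ≥ 0 and ε₂ ≥ 0 be real numbers, set Υ_D := ε₂·G·(X₁·X₁ᵀ − R_D·R_Dᵀ)·Gᵀ, and assume that the (p+r)×(p+r) block matrix [[Υ_D − ε₁·I_p, −Mᵀ − ε₂·G·X₁·W̄₀ᵀ], [−M − ε₂·W̄₀·X₁ᵀ·Gᵀ,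 ε₂·W̄₀·W̄₀ᵀ]] is positive semidefinite. Then −G·S·M − Mᵀ·Sᵀ·Gᵀ ⪰ ε₁·I_p. (Pointwise S-procedure step underlying Theorem 2, with M playing the role of W₀(x)·Y(x).) -/
open Matrix

lemma posSemidef_smul_of_nonneg {k : ℕ} {A : Matrix (Fin k) (Fin k) ℝ}
    (hA : A.PosSemidef) {c : ℝ} (hc : 0 ≤ c) : (c • A).PosSemidef := by
  refine ⟨?_, fun x => ?_⟩
  · unfold Matrix.IsHermitian
    rw [conjTranspose_smul, hA.isHermitian.eq]
    simp
  · exact (hA.smul hc).2 x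

/-- Pointwise S-procedure step underlying Theorem 2: if `X₁ = S W̄₀ + D₀`,
`D₀ D₀ᵀ ⪯ R_D R_Dᵀ`, `ε₁ ≥ 0`, `ε₂ ≥ 0`, and the block matrix
`[[Υ_D − ε₁ I, −Mᵀ − ε₂ G X₁ W̄₀ᵀ], [−M − ε₂ W̄₀ X₁ᵀ Gᵀ, ε₂ W̄₀ W̄₀ᵀ]]` with
`Υ_D := ε₂ G (X₁ X₁ᵀ − R_D R_Dᵀ) Gᵀ` is positive semidefinite, then
`−G S M − Mᵀ Sᵀ Gᵀ ⪰ ε₁ I`. -/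
theorem s_procedure_pointwise_thm2 {p n r T : ℕ}
    (G : Matrix (Fin p) (Fin n) ℝ)
    (S : Matrix (Fin n) (Fin r) ℝ) (Wbar₀ : Matrix (Fin r) (Fin T) ℝ)
    (D₀ X₁ : Matrix (Fin n) (Fin T) ℝ) (hdata : X₁ = S * Wbar₀ + D₀)
    (R_D : Matrix (Fin n) (Fin T) ℝ)
    (hD : (R_D * R_Dᵀ - D₀ * D₀ᵀ).PosSemidef)
    (M : Matrix (Fin r) (Fin p) ℝ)
    (ε₁ ε₂ : ℝ) (hε₁ : 0 ≤ ε₁) (hε₂ : 0 ≤ ε₂)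
    (hblock : (fromBlocks
        (ε₂ • (G * (X₁ * X₁ᵀ - R_D * R_Dᵀ) * Gᵀ) - ε₁ • (1 : Matrix (Fin p) (Fin p) ℝ))
        (-Mᵀ - ε₂ • (G * X₁ * Wbar₀ᵀ))
        (-M - ε₂ • (Wbar₀ * X₁ᵀ * Gᵀ))
        (ε₂ • (Wbar₀ * Wbar₀ᵀ))).PosSemidef) :
    ((-(G * S * M) - Mᵀ * Sᵀ * Gᵀ) - ε₁ • (1 : Matrix (Fin p) (Fin p) ℝ)).PosSemidef := by
  set N : Matrix (Fin p) (Fin p ⊕ Fin r) ℝ :=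
    fromCols (1 : Matrix (Fin p) (Fin p) ℝ) (G * S) with hN
  have h1 := hblock.mul_mul_conjTranspose_same N
  have h2 := (posSemidef_smul_of_nonneg hD hε₂).mul_mul_conjTranspose_same G
  have key : ((-(G * S * M) - Mᵀ * Sᵀ * Gᵀ) - ε₁ • (1 : Matrix (Fin p) (Fin p) ℝ)) =
      N * (fromBlocks
        (ε₂ • (G * (X₁ * X₁ᵀ - R_D * R_Dᵀ) * Gᵀ) - ε₁ • (1 : Matrix (Fin p) (Fin p) ℝ))
        (-Mᵀ - ε₂ • (G * X₁ * Wbar₀ᵀ))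
        (-M - ε₂ • (Wbar₀ * X₁ᵀ * Gᵀ))
        (ε₂ • (Wbar₀ * Wbar₀ᵀ))) * Nᴴ
      + G * (ε₂ • (R_D * R_Dᵀ - D₀ * D₀ᵀ)) * Gᴴ := by
    subst hdata
    rw [hN]
    rw [show (fromCols (1 : Matrix (Fin p) (Fin p) ℝ) (G * S))ᴴ
        = fromRows (1 : Matrix (Fin p) (Fin p) ℝ) (G * S)ᵀ by
      ext (i | i) j <;> simp [fromCols, fromRows_apply_inl, fromRows_apply_inr, conjTranspose, transpose, Matrix.one_apply, eq_comm]]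
    rw [fromCols_mul_fromBlocks, fromCols_mul_fromRows]
    simp only [Matrix.mul_add, Matrix.add_mul, Matrix.mul_sub, Matrix.sub_mul,
      Matrix.smul_mul, Matrix.mul_smul, Matrix.mul_one, Matrix.one_mul,
      Matrix.mul_assoc, transpose_add, transpose_mul, transpose_transpose,
      conjTranspose_eq_transpose_of_trivial, smul_sub, smul_add,
      Matrix.neg_mul, Matrix.mul_neg]
    abel
  rw [key]
  exact h1.add h2
end

section
/- Consider the nonlinear system ẋ = A·Z(x) + B·W(x)·u with state x ∈ ℝⁿ and input u ∈ ℝᵐ, where A is a real n×N matrix, B a real n×q matrix, Z : ℝⁿ → ℝᴺ, and W : ℝⁿ → ℝ^{q×m}. Let Ẑ : ℝⁿ → ℝᵖ be differentiable and H : ℝⁿ → ℝ^{N×p} satisfy Z(x) = H(x)·Ẑ(x) for all x. Let U₀ ∈ ℝ^{m×T}, Z₀ ∈ ℝ^{N×T}, Ū₀ ∈ ℝ^{q×T}, D₀, X₁ ∈ ℝ^{n×T} satisfy X₁ = A·Z₀ + B·Ū₀ + D₀, and assume D₀·D₀ᵀ ⪯ R_D·R_Dᵀ for a given R_D ∈ ℝ^{n×T}.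 Set S := [B A], W̄₀ := [Ū₀ ; Z₀] ∈ ℝ^{(q+N)×T}, and W₀(x) := [W(x)·U₀ ; Z₀] ∈ ℝ^{(q+N)×T}. Suppose there exist a positive definite P ∈ ℝ^{p×p}, a map Y : ℝⁿ → ℝ^{T×p}, and functions ε₁, ε₂ : ℝⁿ → ℝ with ε₁(x) ≥ 0 and ε₂(x) ≥ 0 such that for all x ∈ ℝⁿ: (i) Z₀·Y(x) = H(x)·P, and (ii) with G(x) := the Jacobian ∂Ẑ/∂x (a p×n matrix) and Υ_D(x) := ε₂(x)·G(x)·(X₁·X₁ᵀ − R_D·R_Dᵀ)·G(x)ᵀ, the block matrix [[Υ_D(x) − ε₁(x)·I_p, −Y(x)ᵀ·W₀(x)ᵀ − ε₂(x)·G(x)·X₁·W̄₀ᵀ], [−W₀(x)·Y(x) − ε₂(x)·W̄₀·X₁ᵀ·G(x)ᵀ, ε₂(x)·W̄₀·W̄₀ᵀ]] is positive semidefinite. Then, under the feedback u = U₀·Y(x)·P⁻¹·Ẑ(x), for every differentiable solution x : ℝ → ℝⁿ of the closed-loop system, the function t ↦ V(x(t)) with V(x) = Ẑ(x)ᵀ·P⁻¹·Ẑ(x)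 has derivative at every time t satisfying d/dt V(x(t)) ≤ −ε₁(x(t))·Ẑ(x(t))ᵀ·P⁻¹·P⁻¹·Ẑ(x(t)). (Lyapunov decrease conclusion of Theorem 2, with the SOS conditions relaxed to pointwise positive semidefiniteness; no bound on B is assumed.) -/
open Matrix

private lemma dot_mul_mulVec {k l o : Type*} [Fintype k] [Fintype l] [Fintype o]
    (M : Matrix k l ℝ) (Nm : Matrix l o ℝ) (v : k → ℝ) (w : o → ℝ) :
    v ⬝ᵥ (M * Nm) *ᵥ w = (Mᵀ *ᵥ v) ⬝ᵥ (Nm *ᵥ w) := by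
  rw [dotProduct_mulVec, ← Matrix.vecMul_vecMul, ← dotProduct_mulVec,
    Matrix.mulVec_transpose]

private lemma dot_transpose_mulVec {k l : Type*} [Fintype k] [Fintype l]
    (M : Matrix k l ℝ) (v : l → ℝ) (w : k → ℝ) :
    v ⬝ᵥ Mᵀ *ᵥ w = (M *ᵥ v) ⬝ᵥ w := by
  rw [dotProduct_mulVec, Matrix.vecMul_transpose]

private lemma hasDerivAt_quad {p : ℕ} (M : Matrix (Fin p) (Fin p) ℝ)
    (c : ℝ → Fin p → ℝ) (c' : Fin p → ℝ) (t : ℝ)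
    (hc : HasDerivAt c c' t) :
    HasDerivAt (fun s => c s ⬝ᵥ M *ᵥ (c s))
      (c' ⬝ᵥ M *ᵥ (c t) + c t ⬝ᵥ M *ᵥ c') t := by
  have hci : ∀ i, HasDerivAt (fun s => c s i) (c' i) t := hasDerivAt_pi.mp hc
  have hMi : ∀ i, HasDerivAt (fun s => (M *ᵥ (c s)) i) ((M *ᵥ c') i) t := by
    intro i
    simp only [Matrix.mulVec, dotProduct]
    exact HasDerivAt.fun_sum fun j _ => (hci j).const_mul (M i j)
  have h := HasDerivAt.fun_sum (fun i (_ : i ∈ Finset.univ) => ((hci i).mul (hMi i)))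
  have : (∑ i : Fin p, (c' i * (M *ᵥ (c t)) i + c t i * (M *ᵥ c') i))
      = c' ⬝ᵥ M *ᵥ (c t) + c t ⬝ᵥ M *ᵥ c' := by
    simp [dotProduct, Finset.sum_add_distrib]
  rw [this] at h
  exact h

set_option maxHeartbeats 1000000 in
/-- Lyapunov decrease conclusion of Theorem 2 (no bound on `B` assumed), with the SOS
conditions relaxed to pointwise positive semidefiniteness: along every solution of the
closed-loop system `ẋ = A Z(x) + B W(x) U₀ Y(x) P⁻¹ Ẑ(x)`, the function
`V(x) = Ẑ(x)ᵀ P⁻¹ Ẑ(x)` satisfies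
`d/dt V(x(t)) ≤ −ε₁(x(t)) Ẑ(x(t))ᵀ P⁻¹ P⁻¹ Ẑ(x(t))`. -/
theorem lyapunov_decrease_thm2 {n m N q p T : ℕ}
    (A : Matrix (Fin n) (Fin N) ℝ) (B : Matrix (Fin n) (Fin q) ℝ)
    (Zf : (Fin n → ℝ) → (Fin N → ℝ))
    (W : (Fin n → ℝ) → Matrix (Fin q) (Fin m) ℝ)
    (Zhat : (Fin n → ℝ) → (Fin p → ℝ))
    (Hm : (Fin n → ℝ) → Matrix (Fin N) (Fin p) ℝ)
    (G : (Fin n → ℝ) → Matrix (Fin p) (Fin n) ℝ)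
    -- `Ẑ` is differentiable with Jacobian `G(x)` at every point
    (hZhat : ∀ y : Fin n → ℝ,
      HasFDerivAt Zhat ((Matrix.mulVecLin (G y)).toContinuousLinearMap) y)
    -- `Z(x) = H(x) Ẑ(x)`
    (hZH : ∀ y : Fin n → ℝ, Zf y = (Hm y).mulVec (Zhat y))
    (U₀ : Matrix (Fin m) (Fin T) ℝ) (Z₀ : Matrix (Fin N) (Fin T) ℝ)
    (Ubar₀ : Matrix (Fin q) (Fin T) ℝ)
    (D₀ X₁ : Matrix (Fin n) (Fin T) ℝ)
    (R_D : Matrix (Fin n) (Fin T) ℝ)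
    -- the data equation
    (hdata : X₁ = A * Z₀ + B * Ubar₀ + D₀)
    -- bound on the noise
    (hD : (R_D * R_Dᵀ - D₀ * D₀ᵀ).PosSemidef)
    (P : Matrix (Fin p) (Fin p) ℝ) (hP : P.PosDef)
    (Y : (Fin n → ℝ) → Matrix (Fin T) (Fin p) ℝ)
    (ε₁ ε₂ : (Fin n → ℝ) → ℝ) (hε₁ : ∀ y, 0 ≤ ε₁ y) (hε₂ : ∀ y, 0 ≤ ε₂ y)
    -- consistency condition (i): `Z₀ Y(x) = H(x) P`
    (hcons : ∀ y : Fin n → ℝ, Z₀ * Y y = Hm y * P)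
    -- pointwise positive semidefiniteness condition (ii), with
    -- `W̄₀ := [Ū₀ ; Z₀]` and `W₀(x) := [W(x) U₀ ; Z₀]`
    (hblock : ∀ y : Fin n → ℝ,
      (fromBlocks
        (ε₂ y • (G y * (X₁ * X₁ᵀ - R_D * R_Dᵀ) * (G y)ᵀ)
          - ε₁ y • (1 : Matrix (Fin p) (Fin p) ℝ))
        (-((Y y)ᵀ * (fromRows (W y * U₀) Z₀)ᵀ)
          - ε₂ y • (G y * X₁ * (fromRows Ubar₀ Z₀)ᵀ))
        (-((fromRows (W y * U₀) Z₀) * Y y)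
          - ε₂ y • ((fromRows Ubar₀ Z₀) * X₁ᵀ * (G y)ᵀ))
        (ε₂ y • ((fromRows Ubar₀ Z₀) * (fromRows Ubar₀ Z₀)ᵀ))).PosSemidef)
    -- a differentiable solution of the closed-loop system
    (x : ℝ → (Fin n → ℝ))
    (hx : ∀ t : ℝ, HasDerivAt x
      (A.mulVec (Zf (x t)) + (B * W (x t) * U₀ * Y (x t) * P⁻¹).mulVec (Zhat (x t))) t) :
    ∀ t : ℝ, ∃ d : ℝ,
      HasDerivAt (fun s => Zhat (x s) ⬝ᵥ (P⁻¹.mulVec (Zhat (x s)))) d t ∧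
      d ≤ -(ε₁ (x t)) * (Zhat (x t) ⬝ᵥ ((P⁻¹ * P⁻¹).mulVec (Zhat (x t)))) := by
  intro t
  set y : Fin n → ℝ := x t with hy
  have hdet : IsUnit P.det := hP.det_pos.ne'.isUnit
  have hPP : P * P⁻¹ = 1 := Matrix.mul_nonsing_inv P hdet
  have hPsymm : Pᵀ = P := hP.1
  have hPinvsymm : (P⁻¹)ᵀ = P⁻¹ := by
    rw [Matrix.transpose_nonsing_inv, hPsymm]
  -- notation
  set z : Fin p → ℝ := Zhat y with hz
  set Gm : Matrix (Fin p) (Fin n) ℝ := G y with hGm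
  set v : Fin p → ℝ := P⁻¹ *ᵥ z with hv
  set S : Matrix (Fin n) (Fin q ⊕ Fin N) ℝ := fromCols B A with hS
  set W0 : Matrix (Fin q ⊕ Fin N) (Fin T) ℝ := fromRows (W y * U₀) Z₀ with hW0
  set Wb : Matrix (Fin q ⊕ Fin N) (Fin T) ℝ := fromRows Ubar₀ Z₀ with hWb
  set g : Fin n → ℝ := Gmᵀ *ᵥ v with hg
  set w : Fin q ⊕ Fin N → ℝ := (Gm * S)ᵀ *ᵥ v with hw
  set u : Fin q ⊕ Fin N → ℝ := (W0 * Y y) *ᵥ v with hu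
  set a : Fin T → ℝ := (Gm * X₁)ᵀ *ᵥ v with ha
  set b : Fin T → ℝ := (Gm * D₀)ᵀ *ᵥ v with hb
  set r : Fin T → ℝ := (Gm * R_D)ᵀ *ᵥ v with hr
  have ha' : a = X₁ᵀ *ᵥ g := by
    rw [ha, hg, Matrix.transpose_mul, ← Matrix.mulVec_mulVec]
  have hb' : b = D₀ᵀ *ᵥ g := by
    rw [hb, hg, Matrix.transpose_mul, ← Matrix.mulVec_mulVec]
  have hr' : r = R_Dᵀ *ᵥ g := by
    rw [hr, hg, Matrix.transpose_mul, ← Matrix.mulVec_mulVec]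
  -- data equation in terms of S and Wb
  have hSWb : S * Wb = X₁ - D₀ := by
    rw [hS, hWb, fromCols_mul_fromRows, hdata]; abel
  -- the closed-loop vector field
  have hHm : Hm y = Z₀ * Y y * P⁻¹ := by
    rw [hcons y, Matrix.mul_assoc, hPP, Matrix.mul_one]
  have hxdot : A *ᵥ (Zf y) + (B * W y * U₀ * Y y * P⁻¹) *ᵥ z
      = (S * W0 * Y y) *ᵥ v := by
    rw [hZH y, Matrix.mulVec_mulVec, hHm]
    rw [hS, hW0, fromCols_mul_fromRows]
    rw [hv, Matrix.mulVec_mulVec, ← Matrix.add_mulVec]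
    congr 1
    simp only [Matrix.add_mul, Matrix.mul_assoc]
    abel
  -- derivative of Zhat ∘ x
  have hc : HasDerivAt (fun s => Zhat (x s)) ((Gm * (S * W0 * Y y)) *ᵥ v) t := by
    have h1 := (hZhat (x t)).comp_hasDerivAt t (hx t)
    have h2 : ((Matrix.mulVecLin (G (x t))).toContinuousLinearMap)
        (A *ᵥ (Zf (x t)) + (B * W (x t) * U₀ * Y (x t) * P⁻¹) *ᵥ (Zhat (x t)))
        = (Gm * (S * W0 * Y y)) *ᵥ v := by
      simp only [LinearMap.coe_toContinuousLinearMap', Matrix.mulVecLin_apply, ← hy]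
      rw [← hz, ← hGm, hxdot, Matrix.mulVec_mulVec]
    rw [h2] at h1
    exact h1
  set c' : Fin p → ℝ := (Gm * (S * W0 * Y y)) *ᵥ v with hc'
  refine ⟨c' ⬝ᵥ P⁻¹ *ᵥ z + z ⬝ᵥ P⁻¹ *ᵥ c', hasDerivAt_quad P⁻¹ _ _ t hc, ?_⟩
  -- rewrite the derivative as 2 * (u ⬝ᵥ w)
  have hcv : c' ⬝ᵥ v = u ⬝ᵥ w := by
    rw [hc', dotProduct_comm,
      show Gm * (S * W0 * Y y) = (Gm * S) * (W0 * Y y) by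
        simp only [Matrix.mul_assoc],
      dot_mul_mulVec, ← hw, ← hu, dotProduct_comm]
  have hd2 : c' ⬝ᵥ P⁻¹ *ᵥ z + z ⬝ᵥ P⁻¹ *ᵥ c' = 2 * (u ⬝ᵥ w) := by
    have h3 : z ⬝ᵥ P⁻¹ *ᵥ c' = c' ⬝ᵥ v := by
      rw [← hPinvsymm, dot_transpose_mulVec, ← hv, dotProduct_comm]
    rw [h3, ← hv, hcv]; ring
  rw [hd2]
  -- rewrite the RHS
  have hrhs : z ⬝ᵥ (P⁻¹ * P⁻¹) *ᵥ z = v ⬝ᵥ v := by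
    rw [dot_mul_mulVec, hPinvsymm, ← hv]
  rw [hrhs]
  -- key facts
  have hWbw : Wbᵀ *ᵥ w = a - b := by
    rw [hw, Matrix.mulVec_mulVec, ← Matrix.transpose_mul, Matrix.mul_assoc, hSWb,
      Matrix.mul_sub, Matrix.transpose_sub, Matrix.sub_mulVec, ← ha, ← hb]
  -- noise bound applied to g
  have h5 : 0 ≤ r ⬝ᵥ r - b ⬝ᵥ b := by
    have h6 := hD.dotProduct_mulVec_nonneg g
    simp only [star_trivial] at h6
    rw [Matrix.sub_mulVec, dotProduct_sub, dot_mul_mulVec, dot_mul_mulVec,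
      ← hr', ← hb'] at h6
    linarith
  -- expand the PSD block quadratic form at Sum.elim v w
  have hQF := (hblock y).dotProduct_mulVec_nonneg (Sum.elim v w)
  simp only [star_trivial] at hQF
  rw [fromBlocks_mulVec, sumElim_dotProduct_sumElim] at hQF
  simp only [Sum.elim_comp_inl, Sum.elim_comp_inr] at hQF
  -- compute the four terms
  have hT11 : v ⬝ᵥ ((ε₂ y • (Gm * (X₁ * X₁ᵀ - R_D * R_Dᵀ) * Gmᵀ)
      - ε₁ y • (1 : Matrix (Fin p) (Fin p) ℝ)) *ᵥ v)
      = ε₂ y * (a ⬝ᵥ a) - ε₂ y * (r ⬝ᵥ r) - ε₁ y * (v ⬝ᵥ v) := by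
    have e1 : Gm * (X₁ * X₁ᵀ - R_D * R_Dᵀ) * Gmᵀ
        = (Gm * X₁) * (Gm * X₁)ᵀ - (Gm * R_D) * (Gm * R_D)ᵀ := by
      simp only [Matrix.mul_sub, Matrix.sub_mul, Matrix.transpose_mul,
        Matrix.mul_assoc]
    rw [e1, Matrix.sub_mulVec, Matrix.smul_mulVec, Matrix.smul_mulVec,
      Matrix.one_mulVec, dotProduct_sub, dotProduct_smul, dotProduct_smul,
      Matrix.sub_mulVec, dotProduct_sub, dot_mul_mulVec, dot_mul_mulVec,
      ← ha, ← hr]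
    simp only [smul_eq_mul]
    ring
  have hT12 : v ⬝ᵥ ((-((Y y)ᵀ * W0ᵀ) - ε₂ y • (Gm * X₁ * Wbᵀ)) *ᵥ w)
      = -(u ⬝ᵥ w) - ε₂ y * (a ⬝ᵥ (a - b)) := by
    rw [Matrix.sub_mulVec, Matrix.neg_mulVec, Matrix.smul_mulVec,
      dotProduct_sub, dotProduct_neg, dotProduct_smul,
      ← Matrix.transpose_mul, dot_transpose_mulVec, ← hu,
      dot_mul_mulVec, ← ha, hWbw]
    simp only [smul_eq_mul]
  have hT21 : w ⬝ᵥ ((-(W0 * Y y) - ε₂ y • (Wb * X₁ᵀ * Gmᵀ)) *ᵥ v)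
      = -(u ⬝ᵥ w) - ε₂ y * ((a - b) ⬝ᵥ a) := by
    rw [Matrix.sub_mulVec, Matrix.neg_mulVec, Matrix.smul_mulVec,
      dotProduct_sub, dotProduct_neg, dotProduct_smul,
      show w ⬝ᵥ (W0 * Y y) *ᵥ v = u ⬝ᵥ w by rw [hu, dotProduct_comm],
      Matrix.mul_assoc, ← Matrix.transpose_mul, dot_mul_mulVec, hWbw, ← ha]
    simp only [smul_eq_mul]
  have hT22 : w ⬝ᵥ ((ε₂ y • (Wb * Wbᵀ)) *ᵥ w)
      = ε₂ y * ((a - b) ⬝ᵥ (a - b)) := by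
    rw [Matrix.smul_mulVec, dotProduct_smul, dot_mul_mulVec, hWbw]
    simp only [smul_eq_mul]
  rw [dotProduct_add, dotProduct_add, hT11, hT12, hT21, hT22] at hQF
  -- conclude
  have hbr : 0 ≤ ε₂ y * (r ⬝ᵥ r - b ⬝ᵥ b) := mul_nonneg (hε₂ y) h5
  have hexp : (a - b) ⬝ᵥ (a - b) = a ⬝ᵥ a - 2 * (a ⬝ᵥ b) + b ⬝ᵥ b := by
    rw [dotProduct_sub, sub_dotProduct, sub_dotProduct, dotProduct_comm b a]; ring
  have hexp2 : a ⬝ᵥ (a - b) = a ⬝ᵥ a - a ⬝ᵥ b := by rw [dotProduct_sub]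
  have hexp3 : (a - b) ⬝ᵥ a = a ⬝ᵥ a - a ⬝ᵥ b := by
    rw [sub_dotProduct, dotProduct_comm b a]
  rw [hexp, hexp2, hexp3] at hQF
  nlinarith [hQF, hbr]
end

section
/- Consider the nonlinear system ẋ = A·Z(x) + B·W(x)·u with state x ∈ ℝⁿ and input u ∈ ℝᵐ, where A is a real n×N matrix, B a real n×q matrix, Z : ℝⁿ → ℝᴺ, and W : ℝⁿ → ℝ^{q×m}. Let Ẑ : ℝⁿ → ℝᵖ be differentiable and H : ℝⁿ → ℝ^{N×p} satisfy Z(x) = H(x)·Ẑ(x) for all x. Let U₀ ∈ ℝ^{m×T}, Z₀ ∈ ℝ^{N×T}, Ū₀ ∈ ℝ^{q×T}, D₀, X₁ ∈ ℝ^{n×T} satisfy X₁ = A·Z₀ + B·Ū₀ + D₀, and assume D₀·D₀ᵀ ⪯ R_D·R_Dᵀ for a given R_D ∈ ℝ^{n×T}. Set S := [B A] and W̄₀ := [Ū₀ ; Z₀] ∈ ℝ^{(q+N)×T}. Suppose there exist a positive definite P ∈ ℝ^{p×p}, a map K : ℝⁿ → ℝ^{m×p}, and functions ε₁, ε₂ :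 ℝⁿ → ℝ with ε₁(x) ≥ 0 and ε₂(x) ≥ 0 such that for all x ∈ ℝⁿ, with G(x) := the Jacobian ∂Ẑ/∂x (a p×n matrix), M(x) := [W(x)·K(x) ; H(x)·P] ∈ ℝ^{(q+N)×p}, and Υ_D(x) := ε₂(x)·G(x)·(X₁·X₁ᵀ − R_D·R_Dᵀ)·G(x)ᵀ, the block matrix [[Υ_D(x) − ε₁(x)·I_p, −M(x)ᵀ − ε₂(x)·G(x)·X₁·W̄₀ᵀ], [−M(x) − ε₂(x)·W̄₀·X₁ᵀ·G(x)ᵀ, ε₂(x)·W̄₀·W̄₀ᵀ]] is positive semidefinite. Then, under the feedback u = K(x)·P⁻¹·Ẑ(x), for every differentiable solution x : ℝ → ℝⁿ of the closed-loop system ẋ = A·Z(x) + B·W(x)·K(x)·P⁻¹·Ẑ(x), the function t ↦ V(x(t)) with V(x) = Ẑ(x)ᵀ·P⁻¹·Ẑ(x) has derivative at every time t satisfying d/dt V(x(t)) ≤ −ε₁(x(t))·Ẑ(x(t))ᵀ·P⁻¹·P⁻¹·Ẑ(x(t)). (Lyapunov decrease conclusion of Corollary 1, with the SOS conditions relaxed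 to pointwise positive semidefiniteness; the decision variable K(x) has size independent of the number of data T.) -/
open Matrix

private theorem mulVec_dotProduct' {α β : Type*} [Fintype α] [Fintype β]
    (M : Matrix α β ℝ) (a : β → ℝ) (z : α → ℝ) :
    (M *ᵥ a) ⬝ᵥ z = a ⬝ᵥ (Mᵀ *ᵥ z) := by
  rw [dotProduct_comm, dotProduct_mulVec, ← mulVec_transpose, dotProduct_comm]

private theorem key_quad {α β : Type*} [Fintype α] [Fintype β]
    (TL : Matrix α α ℝ) (TR : Matrix α β ℝ) (BL : Matrix β α ℝ)
    (BR : Matrix β β ℝ) (J : Matrix β α ℝ) (a : α → ℝ) :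
    Sum.elim a (J *ᵥ a) ⬝ᵥ (fromBlocks TL TR BL BR *ᵥ Sum.elim a (J *ᵥ a))
      = a ⬝ᵥ ((TL + TR * J + Jᵀ * BL + Jᵀ * (BR * J)) *ᵥ a) := by
  simp only [fromBlocks_mulVec, sumElim_dotProduct_sumElim, dotProduct_add, add_mulVec,
    mulVec_mulVec, mulVec_dotProduct', Sum.elim_comp_inl, Sum.elim_comp_inr, Matrix.mul_assoc]
  ring

/-- Lyapunov decrease conclusion of Corollary 1 (decision variable `K(x)` of size
independent of the number of data `T`), with the SOS conditions relaxed to pointwise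
positive semidefiniteness: along every solution of the closed-loop system
`ẋ = A Z(x) + B W(x) K(x) P⁻¹ Ẑ(x)`, the function `V(x) = Ẑ(x)ᵀ P⁻¹ Ẑ(x)` satisfies
`d/dt V(x(t)) ≤ −ε₁(x(t)) Ẑ(x(t))ᵀ P⁻¹ P⁻¹ Ẑ(x(t))`. -/
theorem lyapunov_decrease_cor1 {n m N q p T : ℕ}
    (A : Matrix (Fin n) (Fin N) ℝ) (B : Matrix (Fin n) (Fin q) ℝ)
    (Zf : (Fin n → ℝ) → (Fin N → ℝ))
    (W : (Fin n → ℝ) → Matrix (Fin q) (Fin m) ℝ)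
    (Zhat : (Fin n → ℝ) → (Fin p → ℝ))
    (Hm : (Fin n → ℝ) → Matrix (Fin N) (Fin p) ℝ)
    (G : (Fin n → ℝ) → Matrix (Fin p) (Fin n) ℝ)
    -- `Ẑ` is differentiable with Jacobian `G(x)` at every point
    (hZhat : ∀ y : Fin n → ℝ,
      HasFDerivAt Zhat ((Matrix.mulVecLin (G y)).toContinuousLinearMap) y)
    -- `Z(x) = H(x) Ẑ(x)`
    (hZH : ∀ y : Fin n → ℝ, Zf y = (Hm y).mulVec (Zhat y))
    (U₀ : Matrix (Fin m) (Fin T) ℝ) (Z₀ : Matrix (Fin N) (Fin T) ℝ)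
    (Ubar₀ : Matrix (Fin q) (Fin T) ℝ)
    (D₀ X₁ : Matrix (Fin n) (Fin T) ℝ)
    (R_D : Matrix (Fin n) (Fin T) ℝ)
    -- the data equation
    (hdata : X₁ = A * Z₀ + B * Ubar₀ + D₀)
    -- bound on the noise
    (hD : (R_D * R_Dᵀ - D₀ * D₀ᵀ).PosSemidef)
    (P : Matrix (Fin p) (Fin p) ℝ) (hP : P.PosDef)
    (K : (Fin n → ℝ) → Matrix (Fin m) (Fin p) ℝ)
    (ε₁ ε₂ : (Fin n → ℝ) → ℝ) (hε₁ : ∀ y, 0 ≤ ε₁ y) (hε₂ : ∀ y, 0 ≤ ε₂ y)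
    -- pointwise positive semidefiniteness condition, with
    -- `M(x) := [W(x) K(x) ; H(x) P]` and `W̄₀ := [Ū₀ ; Z₀]`
    (hblock : ∀ y : Fin n → ℝ,
      (fromBlocks
        (ε₂ y • (G y * (X₁ * X₁ᵀ - R_D * R_Dᵀ) * (G y)ᵀ)
          - ε₁ y • (1 : Matrix (Fin p) (Fin p) ℝ))
        (-(fromRows (W y * K y) (Hm y * P))ᵀ
          - ε₂ y • (G y * X₁ * (fromRows Ubar₀ Z₀)ᵀ))
        (-(fromRows (W y * K y) (Hm y * P))
          - ε₂ y • ((fromRows Ubar₀ Z₀) * X₁ᵀ * (G y)ᵀ))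
        (ε₂ y • ((fromRows Ubar₀ Z₀) * (fromRows Ubar₀ Z₀)ᵀ))).PosSemidef)
    -- a differentiable solution of the closed-loop system
    (x : ℝ → (Fin n → ℝ))
    (hx : ∀ t : ℝ, HasDerivAt x
      (A.mulVec (Zf (x t)) + (B * W (x t) * K (x t) * P⁻¹).mulVec (Zhat (x t))) t) :
    ∀ t : ℝ, ∃ d : ℝ,
      HasDerivAt (fun s => Zhat (x s) ⬝ᵥ (P⁻¹.mulVec (Zhat (x s)))) d t ∧
      d ≤ -(ε₁ (x t)) * (Zhat (x t) ⬝ᵥ ((P⁻¹ * P⁻¹).mulVec (Zhat (x t)))) := by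
  intro t
  have hPdet : IsUnit P.det := isUnit_iff_ne_zero.2 hP.det_pos.ne'
  have hPT : Pᵀ = P := by rw [← conjTranspose_eq_transpose_of_trivial]; exact hP.1
  have hPinvT : P⁻¹ᵀ = P⁻¹ := by rw [transpose_nonsing_inv, hPT]
  set y := x t with hy
  set v : Fin p → ℝ := P⁻¹ *ᵥ Zhat y with hv
  have hPv : P *ᵥ v = Zhat y := by
    rw [hv, mulVec_mulVec, Matrix.mul_nonsing_inv P hPdet, one_mulVec]
  -- generic inner-product symmetry fact
  have hdot : ∀ w : Fin p → ℝ, Zhat y ⬝ᵥ (P⁻¹ *ᵥ w) = v ⬝ᵥ w := by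
    intro w
    rw [dotProduct_mulVec, ← hPinvT, vecMul_transpose]
  set xd := A *ᵥ (Zf y) + (B * W y * K y * P⁻¹) *ᵥ (Zhat y) with hxd
  set wv := G y *ᵥ xd with hwv
  -- derivative computation
  have h1 : HasDerivAt (fun s => Zhat (x s)) wv t := by
    simpa [Function.comp_def] using (hZhat y).comp_hasDerivAt t (hx t)
  have h2 : HasDerivAt (fun s => P⁻¹ *ᵥ (Zhat (x s))) (P⁻¹ *ᵥ wv) t := by
    simpa [Function.comp_def] using
      ((Matrix.mulVecLin (P⁻¹ : Matrix (Fin p) (Fin p) ℝ)).toContinuousLinearMap.hasFDerivAt).comp_hasDerivAt t h1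
  have hφ : ∀ i, HasDerivAt (fun s => Zhat (x s) i) (wv i) t := fun i => by
    simpa [Function.comp_def] using
      ((ContinuousLinearMap.proj (R := ℝ) (φ := fun _ : Fin p => ℝ) i).hasFDerivAt).comp_hasDerivAt t h1
  have hψ : ∀ i, HasDerivAt (fun s => (P⁻¹ *ᵥ (Zhat (x s))) i) ((P⁻¹ *ᵥ wv) i) t := fun i => by
    simpa [Function.comp_def] using
      ((ContinuousLinearMap.proj (R := ℝ) (φ := fun _ : Fin p => ℝ) i).hasFDerivAt).comp_hasDerivAt t h2
  have hV : HasDerivAt (fun s => Zhat (x s) ⬝ᵥ (P⁻¹ *ᵥ (Zhat (x s))))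
      (wv ⬝ᵥ (P⁻¹ *ᵥ Zhat y) + Zhat y ⬝ᵥ (P⁻¹ *ᵥ wv)) t := by
    have hsum : HasDerivAt (fun s => ∑ i, Zhat (x s) i * (P⁻¹ *ᵥ (Zhat (x s))) i)
        (∑ i, (wv i * (P⁻¹ *ᵥ Zhat y) i + Zhat y i * (P⁻¹ *ᵥ wv) i)) t :=
      HasDerivAt.fun_sum fun i _ => (hφ i).mul (hψ i)
    simpa [dotProduct, Finset.sum_add_distrib] using hsum
  refine ⟨_, hV, ?_⟩
  -- abbreviations
  set S : Matrix (Fin n) (Fin q ⊕ Fin N) ℝ := fromCols B A with hS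
  set MM : Matrix (Fin q ⊕ Fin N) (Fin p) ℝ := fromRows (W y * K y) (Hm y * P) with hMM
  set Wb : Matrix (Fin q ⊕ Fin N) (Fin T) ℝ := fromRows Ubar₀ Z₀ with hWb
  set E : Matrix (Fin p) (Fin p) ℝ := G y * S * MM with hE
  have hX1 : X₁ = S * Wb + D₀ := by
    rw [hdata, hS, hWb, fromCols_mul_fromRows]; abel
  -- velocity in terms of v
  have e1 : A *ᵥ Zf y = (A * (Hm y * P)) *ᵥ v := by
    conv_rhs => rw [← mulVec_mulVec, ← mulVec_mulVec, hPv]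
    rw [hZH y]
  have e2 : (B * W y * K y * P⁻¹) *ᵥ Zhat y = (B * (W y * K y)) *ᵥ v := by
    rw [hv, mulVec_mulVec, Matrix.mul_assoc B (W y) (K y)]
  have hxd2 : xd = (S * MM) *ᵥ v := by
    rw [hS, hMM, fromCols_mul_fromRows, add_mulVec, hxd, e1, e2, add_comm]
  have hwv2 : wv = E *ᵥ v := by
    rw [hwv, hxd2, mulVec_mulVec, hE, Matrix.mul_assoc]
  -- apply the block positivity hypothesis
  set J : Matrix (Fin q ⊕ Fin N) (Fin p) ℝ := (G y * S)ᵀ with hJ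
  have hQ := (hblock y).dotProduct_mulVec_nonneg (Sum.elim v (J *ᵥ v))
  rw [star_trivial, key_quad] at hQ
  -- compress the matrix
  have hclaim :
      (ε₂ y • (G y * (X₁ * X₁ᵀ - R_D * R_Dᵀ) * (G y)ᵀ) - ε₁ y • (1 : Matrix (Fin p) (Fin p) ℝ))
      + (-(MM)ᵀ - ε₂ y • (G y * X₁ * Wbᵀ)) * J
      + Jᵀ * (-(MM) - ε₂ y • (Wb * X₁ᵀ * (G y)ᵀ))
      + Jᵀ * ((ε₂ y • (Wb * Wbᵀ)) * J)
      = ε₂ y • (G y * (D₀ * D₀ᵀ - R_D * R_Dᵀ) * (G y)ᵀ) - ε₁ y • (1 : Matrix (Fin p) (Fin p) ℝ)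
        - E - Eᵀ := by
    rw [hX1, hJ, hE]
    simp only [transpose_mul, transpose_add, transpose_sub, transpose_smul, transpose_neg,
      transpose_transpose, Matrix.mul_add, Matrix.add_mul, Matrix.mul_sub, Matrix.sub_mul,
      Matrix.neg_mul, Matrix.mul_neg, Matrix.smul_mul, Matrix.mul_smul, Matrix.mul_assoc]
    module
  rw [hclaim] at hQ
  -- expand the scalar inequality
  set u' : Fin n → ℝ := (G y)ᵀ *ᵥ v with hu'
  have hGu : v ⬝ᵥ ((G y * (D₀ * D₀ᵀ - R_D * R_Dᵀ) * (G y)ᵀ) *ᵥ v)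
      = u' ⬝ᵥ ((D₀ * D₀ᵀ - R_D * R_Dᵀ) *ᵥ u') := by
    rw [← mulVec_mulVec, ← mulVec_mulVec, dotProduct_comm, mulVec_dotProduct', hu']
    exact dotProduct_comm _ _
  have hET : v ⬝ᵥ (Eᵀ *ᵥ v) = v ⬝ᵥ (E *ᵥ v) := by
    rw [← mulVec_dotProduct', dotProduct_comm]
  rw [Matrix.sub_mulVec, Matrix.sub_mulVec, Matrix.sub_mulVec, dotProduct_sub, dotProduct_sub,
    dotProduct_sub, smul_mulVec, smul_mulVec, dotProduct_smul, dotProduct_smul,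
    one_mulVec, hGu, hET, smul_eq_mul, smul_eq_mul] at hQ
  -- noise bound
  have hDneg : ε₂ y * (u' ⬝ᵥ ((D₀ * D₀ᵀ - R_D * R_Dᵀ) *ᵥ u')) ≤ 0 := by
    have h0 := hD.dotProduct_mulVec_nonneg u'
    rw [star_trivial] at h0
    have : u' ⬝ᵥ ((D₀ * D₀ᵀ - R_D * R_Dᵀ) *ᵥ u')
        = -(u' ⬝ᵥ ((R_D * R_Dᵀ - D₀ * D₀ᵀ) *ᵥ u')) := by
      rw [← neg_sub, Matrix.neg_mulVec, dotProduct_neg]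
    rw [this]
    have := mul_nonneg (hε₂ y) h0
    linarith
  -- final assembly
  have hRHS : Zhat y ⬝ᵥ ((P⁻¹ * P⁻¹) *ᵥ Zhat y) = v ⬝ᵥ v := by
    rw [← mulVec_mulVec, hdot]
  have hL1 : wv ⬝ᵥ (P⁻¹ *ᵥ Zhat y) = v ⬝ᵥ (E *ᵥ v) := by
    rw [← hv, dotProduct_comm, hwv2]
  have hL2 : Zhat y ⬝ᵥ (P⁻¹ *ᵥ wv) = v ⬝ᵥ (E *ᵥ v) := by
    rw [hdot, hwv2]
  rw [hRHS, hL1, hL2]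
  nlinarith [hQ, hDneg]
end
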